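/- Let R be a nontrivial commutative ring with identity such that Z(R) is an ideal of R. If there exists a pair of zero-divisors x, y of R with ann(x,y) = (0), then the diameter of the zero-divisor graph Γ(R) equals 3. -/

import Mathlib

/-- The set of zero-divisors of a commutative ring (including `0`). -/
def zdSet (R : Type*) [CommRing R] : Set R :=
  {x : R | ∃ y : R, y ≠ 0 ∧ x * y = 0}

/-- The set of nonzero zero-divisors. -/
def zdStar (R : Type*) [CommRing R] : Set R :=
  {x : R | x ≠ 0 ∧ ∃ y : R, y ≠ 0 ∧ x * y = 0}

/-- The zero-divisor graph `Γ(R)`: vertices are the nonzero zero-divisors, and distinct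
`x`, `y` are adjacent iff `x * y = 0`. -/
def zdGraph (R : Type*) [CommRing R] : SimpleGraph (zdStar R) where
  Adj x y := x.1 ≠ y.1 ∧ x.1 * y.1 = 0
  symm := ⟨fun x y h => ⟨h.1.symm, by rw [mul_comm]; exact h.2⟩⟩
  loopless := ⟨fun x h => h.1 rfl⟩

/-- The extended zero-divisor graph `Γ̃(R)`: vertices are the nonzero zero-divisors, and
distinct `x`, `y` are adjacent iff `x * y = 0` or `x + y ∈ Z(R)`. -/
def zdExtGraph (R : Type*) [CommRing R] : SimpleGraph (zdStar R) where
  Adj x y := x.1 ≠ y.1 ∧ (x.1 * y.1 = 0 ∨ x.1 + y.1 ∈ zdSet R)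
  symm := ⟨fun x y h => ⟨h.1.symm, by rw [mul_comm, add_comm]; exact h.2⟩⟩
  loopless := ⟨fun x h => h.1 rfl⟩

universe u

/-- Upper bound: when every vertex works as needed, any two vertices of `Γ(R)` are at
extended distance at most `3`. (Anderson–Livingston argument.) -/
lemma zd_edist_le_three (R : Type u) [CommRing R] (u v : zdStar R) :
    (zdGraph R).edist u v ≤ 3 := by
  by_cases huv : u = v
  · subst huv; simp [SimpleGraph.edist_self]
  obtain ⟨ha0, a', ha'0, haa'⟩ := u.2
  obtain ⟨hb0, b', hb'0, hbb'⟩ := v.2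
  set a : R := u.1 with ha_def
  set b : R := v.1 with hb_def
  have hab_ne : a ≠ b := fun h => huv (Subtype.ext h)
  by_cases hab : a * b = 0
  · -- adjacent
    have : (zdGraph R).Adj u v := ⟨hab_ne, hab⟩
    calc (zdGraph R).edist u v ≤ ((SimpleGraph.Walk.cons this SimpleGraph.Walk.nil).length : ℕ∞) :=
          SimpleGraph.edist_le _
      _ ≤ 3 := by simp
  · by_cases h1 : a' * b' = 0
    · by_cases haa : a' = a
      · -- a² = 0, so a * b' = 0 : path u - b' - v
        have hab' : a * b' = 0 := by rw [← haa]; exact h1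
        have hb'v : b' ∈ zdStar R := ⟨hb'0, b, hb0, by rw [mul_comm]; exact hbb'⟩
        have hb'a : b' ≠ a := fun h => hab (by rw [← h, mul_comm]; exact hbb')
        have hb'b : b' ≠ b := fun h => hab (by rw [← h]; exact hab')
        have e1 : (zdGraph R).Adj u ⟨b', hb'v⟩ := ⟨fun h => hb'a h.symm, hab'⟩
        have e2 : (zdGraph R).Adj ⟨b', hb'v⟩ v := ⟨hb'b, by rw [mul_comm]; exact hbb'⟩
        calc (zdGraph R).edist u v
            ≤ ((SimpleGraph.Walk.cons e1 (SimpleGraph.Walk.cons e2 SimpleGraph.Walk.nil)).length : ℕ∞) :=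
              SimpleGraph.edist_le _
          _ ≤ 3 := by simp; norm_num
      · by_cases hbb : b' = b
        · -- b² = 0 : path u - a' - v
          have ha'b : a' * b = 0 := by rw [← hbb]; exact h1
          have ha'v : a' ∈ zdStar R := ⟨ha'0, a, ha0, by rw [mul_comm]; exact haa'⟩
          have ha'b_ne : a' ≠ b := fun h => hab (by rw [← h]; exact haa')
          have e1 : (zdGraph R).Adj u ⟨a', ha'v⟩ := ⟨fun h => haa h.symm, haa'⟩
          have e2 : (zdGraph R).Adj ⟨a', ha'v⟩ v := ⟨ha'b_ne, ha'b⟩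
          calc (zdGraph R).edist u v
              ≤ ((SimpleGraph.Walk.cons e1 (SimpleGraph.Walk.cons e2 SimpleGraph.Walk.nil)).length : ℕ∞) :=
                SimpleGraph.edist_le _
            _ ≤ 3 := by simp; norm_num
        · by_cases hab'' : a' = b'
          · -- common neighbor a'
            have ha'v : a' ∈ zdStar R := ⟨ha'0, a, ha0, by rw [mul_comm]; exact haa'⟩
            have ha'b : a' * b = 0 := by rw [hab'', mul_comm]; exact hbb'
            have ha'b_ne : a' ≠ b := fun h => hab (by rw [← h]; exact haa')
            have e1 : (zdGraph R).Adj u ⟨a', ha'v⟩ := ⟨fun h => haa h.symm, haa'⟩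
            have e2 : (zdGraph R).Adj ⟨a', ha'v⟩ v := ⟨ha'b_ne, ha'b⟩
            calc (zdGraph R).edist u v
                ≤ ((SimpleGraph.Walk.cons e1 (SimpleGraph.Walk.cons e2 SimpleGraph.Walk.nil)).length : ℕ∞) :=
                  SimpleGraph.edist_le _
              _ ≤ 3 := by simp; norm_num
          · -- path u - a' - b' - v of length 3
            have ha'v : a' ∈ zdStar R := ⟨ha'0, a, ha0, by rw [mul_comm]; exact haa'⟩
            have hb'v : b' ∈ zdStar R := ⟨hb'0, b, hb0, by rw [mul_comm]; exact hbb'⟩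
            have e1 : (zdGraph R).Adj u ⟨a', ha'v⟩ := ⟨fun h => haa h.symm, haa'⟩
            have e2 : (zdGraph R).Adj (⟨a', ha'v⟩ : zdStar R) ⟨b', hb'v⟩ := ⟨hab'', h1⟩
            have e3 : (zdGraph R).Adj (⟨b', hb'v⟩ : zdStar R) v :=
              ⟨hbb, by rw [mul_comm]; exact hbb'⟩
            calc (zdGraph R).edist u v
                ≤ ((SimpleGraph.Walk.cons e1 (SimpleGraph.Walk.cons e2
                      (SimpleGraph.Walk.cons e3 SimpleGraph.Walk.nil))).length : ℕ∞) :=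
                  SimpleGraph.edist_le _
              _ ≤ 3 := by simp
    · -- c := a' * b' is a common neighbor
      have hca : (a' * b') * a = 0 := by
        have : (a' * b') * a = (a * a') * b' := by ring
        rw [this, haa', zero_mul]
      have hcb : (a' * b') * b = 0 := by
        have : (a' * b') * b = (b * b') * a' := by ring
        rw [this, hbb', zero_mul]
      have hcv : a' * b' ∈ zdStar R := ⟨h1, a, ha0, hca⟩
      have hca_ne : a' * b' ≠ a := fun h => hab (by rw [← h]; exact hcb)
      have hcb_ne : a' * b' ≠ b := fun h => hab (by rw [← h, mul_comm]; exact hca)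
      have e1 : (zdGraph R).Adj u ⟨a' * b', hcv⟩ :=
        ⟨fun h => hca_ne h.symm, by rw [mul_comm]; exact hca⟩
      have e2 : (zdGraph R).Adj (⟨a' * b', hcv⟩ : zdStar R) v := ⟨hcb_ne, hcb⟩
      calc (zdGraph R).edist u v
          ≤ ((SimpleGraph.Walk.cons e1 (SimpleGraph.Walk.cons e2 SimpleGraph.Walk.nil)).length : ℕ∞) :=
            SimpleGraph.edist_le _
        _ ≤ 3 := by simp; norm_num

/-- A walk of length `< 3` yields equality, adjacency, or a common neighbor. -/
lemma walk_lt_three {V : Type*} {G : SimpleGraph V} {u v : V} (p : G.Walk u v)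
    (h : p.length < 3) : u = v ∨ G.Adj u v ∨ ∃ w, G.Adj u w ∧ G.Adj w v := by
  cases p with
  | nil => exact Or.inl rfl
  | @cons _ w _ hadj q =>
    cases q with
    | nil => exact Or.inr (Or.inl hadj)
    | @cons _ w2 _ hadj2 q2 =>
      have hq2 : q2.length = 0 := by
        simp only [SimpleGraph.Walk.length_cons] at h
        omega
      have hw2 := SimpleGraph.Walk.eq_of_length_eq_zero hq2
      subst hw2
      exact Or.inr (Or.inr ⟨w, hadj, hadj2⟩)

theorem stmt6 (R : Type u) [CommRing R] [Nontrivial R]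
    (hcard : (zdStar R).Nontrivial)
    (hideal : ∃ I : Ideal R, (I : Set R) = zdSet R)
    (hann : ∃ x ∈ zdSet R, ∃ y ∈ zdSet R, ∀ a : R, a * x = 0 → a * y = 0 → a = 0) :
    (zdGraph R).ediam = 3 := by
  obtain ⟨x, hx, y, hy, hann⟩ := hann
  obtain ⟨I, hI⟩ := hideal
  -- x ≠ 0
  have hx0 : x ≠ 0 := by
    rintro rfl
    obtain ⟨b, hb0, hyb⟩ := hy
    exact hb0 (hann b (mul_zero b) (by rw [mul_comm]; exact hyb))
  have hy0 : y ≠ 0 := by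
    rintro rfl
    obtain ⟨b, hb0, hxb⟩ := hx
    exact hb0 (hann b (by rw [mul_comm]; exact hxb) (mul_zero b))
  -- x * y ≠ 0
  have hxy : x * y ≠ 0 := by
    intro h
    have hsum : x + y ∈ zdSet R := by
      rw [← hI] at hx hy ⊢
      exact I.add_mem hx hy
    obtain ⟨c, hc0, hc⟩ := hsum
    have hcx : (c * x) * x = 0 := by linear_combination x * hc - c * h
    have hcy : (c * x) * y = 0 := by linear_combination c * h
    have hcx0 : c * x = 0 := hann (c * x) hcx hcy
    have hcy0 : c * y = 0 := by linear_combination hc - hcx0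
    exact hc0 (hann c hcx0 hcy0)
  -- x ≠ y
  have hxney : x ≠ y := by
    intro h
    obtain ⟨b, hb0, hxb⟩ := hx
    exact hb0 (hann b (by rw [mul_comm]; exact hxb)
      (by rw [← h, mul_comm]; exact hxb))
  have xv : x ∈ zdStar R := ⟨hx0, hx⟩
  have yv : y ∈ zdStar R := ⟨hy0, hy⟩
  set X : zdStar R := ⟨x, xv⟩
  set Y : zdStar R := ⟨y, yv⟩
  -- lower bound : edist X Y ≥ 3
  have hupper : (zdGraph R).edist X Y ≤ 3 := zd_edist_le_three R X Y
  have hlow : 3 ≤ (zdGraph R).edist X Y := by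
    by_contra hlt
    push_neg at hlt
    have hne_top : (zdGraph R).edist X Y ≠ ⊤ :=
      fun h => by rw [h] at hupper; exact (by simp : ¬ (⊤:ℕ∞) ≤ 3) hupper
    obtain ⟨p, hp⟩ := (SimpleGraph.reachable_of_edist_ne_top hne_top).exists_walk_length_eq_edist
    have hplen : p.length < 3 := by
      have : (p.length : ℕ∞) < 3 := by rw [hp]; exact hlt
      exact_mod_cast this
    rcases walk_lt_three p hplen with heq | hadj | ⟨w, h1, h2⟩
    · exact hxney (congrArg Subtype.val heq)
    · exact hxy hadj.2
    · exact w.2.1 (hann w.1 (by rw [mul_comm]; exact h1.2) h2.2)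
  refine le_antisymm (SimpleGraph.ediam_le_of_edist_le (zd_edist_le_three R)) ?_
  exact le_trans hlow SimpleGraph.edist_le_ediam
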